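/- Let ε satisfy 0 < |ε| < 1 and let Φ_ε be the rational map Φ_ε(x,y) = ( (ε(ε+1)x² + εxy + (1−2ε)x)/D(x,y), (ε(2ε−4)x² − ε(ε+3)xy + 6εx − εy² + (2ε+1)y)/D(x,y) ), D(x,y) = 2ε²x² − ε(ε+1)x − εy + 2ε + 1. Consider the invariant conic C_{−2} = {(x,y) ∈ ℝ² : (2 − 5ε² + 4ε²)x² + 2xy + y² − 6x − 4y + 4 = 0} (the level curve of energy h = −2). Then (0,2) ∈ C_{−2} is a fixed point of Φ_ε, and for every point p ∈ C_{−2} whose entire forward orbit under Φ_ε is defined (i.e. D is nonzero along the orbit), the iterates Φ_εⁿ(p) converge to (0,2) as n → ∞. -/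

import Mathlib

/-- Denominator of the Kahan–Hirota–Kimura map `Φ_ε` of the system
`ẋ = x(x+y-2)`, `ẏ = -x(2x+y-3)`. -/
noncomputable def Dps (ε x y : ℝ) : ℝ :=
  2 * ε ^ 2 * x ^ 2 - ε * (ε + 1) * x - ε * y + 2 * ε + 1

/-- The Kahan–Hirota–Kimura map `Φ_ε` of the system `ẋ = x(x+y-2)`, `ẏ = -x(2x+y-3)`. -/
noncomputable def Phips (ε : ℝ) (q : ℝ × ℝ) : ℝ × ℝ :=
  ((ε * (ε + 1) * q.1 ^ 2 + ε * q.1 * q.2 + (1 - 2 * ε) * q.1) / Dps ε q.1 q.2,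
   (ε * (2 * ε - 4) * q.1 ^ 2 - ε * (ε + 3) * q.1 * q.2 + 6 * ε * q.1 - ε * q.2 ^ 2
      + (2 * ε + 1) * q.2) / Dps ε q.1 q.2)

/-- The invariant conic `C_h` of `Φ_ε`. -/
def Cps (ε h : ℝ) : Set (ℝ × ℝ) :=
  {q : ℝ × ℝ | (2 - 5 * ε ^ 2 - 2 * ε ^ 2 * h) * q.1 ^ 2 + 2 * q.1 * q.2 + q.2 ^ 2
      - 6 * q.1 - 4 * q.2 - 2 * h = 0}

/-- For `0 < |ε| < 1`, the point `(0,2)` lies on the invariant conic `C_{-2}`, is a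
fixed point of `Φ_ε`, and attracts every point of `C_{-2}` whose entire forward orbit
under `Φ_ε` is defined. -/
noncomputable def fparam (ε v : ℝ) : ℝ × ℝ :=
  (2 / ((1 + v) ^ 2 + 1 - ε ^ 2), 2 + 2 * v / ((1 + v) ^ 2 + 1 - ε ^ 2))

lemma spos (ε v : ℝ) (hε1 : |ε| < 1) : 0 < (1 + v) ^ 2 + 1 - ε ^ 2 := by
  have : ε ^ 2 < 1 := by nlinarith [abs_nonneg ε, sq_abs ε]
  nlinarith [sq_nonneg (1 + v)]

set_option maxHeartbeats 1000000 in
lemma stepkey (ε v : ℝ) (hε1 : |ε| < 1)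
    (hd : Dps ε (fparam ε v).1 (fparam ε v).2 ≠ 0) :
    Phips ε (fparam ε v) = fparam ε (v - 2 * ε) := by
  have h1 := (spos ε v hε1).ne'
  have h2 := (spos ε (v - 2 * ε) hε1).ne'
  simp only [Phips, fparam, Dps] at *
  refine Prod.ext ?_ ?_ <;> simp only
  · rw [div_eq_div_iff hd h2]
    field_simp
    ring
  · rw [add_div' _ _ _ h2, div_eq_div_iff hd h2]
    field_simp
    ring

lemma paramkey (ε : ℝ) (hε1 : |ε| < 1) (q : ℝ × ℝ) (hq : q ∈ Cps ε (-2))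
    (hx : q.1 ≠ 0) : q = fparam ε ((q.2 - 2) / q.1) := by
  set u := (q.2 - 2) / q.1 with hu_def
  have hs := (spos ε u hε1)
  have hu : u * q.1 = q.2 - 2 := div_mul_cancel₀ _ hx
  simp only [Cps, Set.mem_setOf_eq] at hq
  have key : q.1 * ((1 + u) ^ 2 + 1 - ε ^ 2) = 2 := by
    have h0 : q.1 * (q.1 * ((1 + u) ^ 2 + 1 - ε ^ 2) - 2) = 0 := by
      linear_combination hq + (u * q.1 + q.2 - 2 + 2 * q.1) * hu
    rcases mul_eq_zero.mp h0 with h | h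
    · exact absurd h hx
    · linarith [sub_eq_zero.mp h]
  have hx1 : q.1 = 2 / ((1 + u) ^ 2 + 1 - ε ^ 2) := by
    field_simp
    linarith [key]
  refine Prod.ext ?_ ?_ <;> simp only [fparam]
  · exact hx1
  · have : 2 * u / ((1 + u) ^ 2 + 1 - ε ^ 2) = u * q.1 := by
      rw [hx1]; ring
    rw [this, hu]; ring

theorem stmt_5 (ε : ℝ) (hε0 : 0 < |ε|) (hε1 : |ε| < 1) :
    ((0 : ℝ), (2 : ℝ)) ∈ Cps ε (-2) ∧
    Phips ε ((0 : ℝ), (2 : ℝ)) = ((0 : ℝ), (2 : ℝ)) ∧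
    ∀ q ∈ Cps ε (-2),
      (∀ n : ℕ, Dps ε ((Phips ε)^[n] q).1 ((Phips ε)^[n] q).2 ≠ 0) →
      Filter.Tendsto (fun n : ℕ => (Phips ε)^[n] q) Filter.atTop
        (nhds ((0 : ℝ), (2 : ℝ))) := by
  have hfix : Phips ε ((0 : ℝ), (2 : ℝ)) = ((0 : ℝ), (2 : ℝ)) := by
    have h : Dps ε 0 2 = 1 := by simp only [Dps]; ring
    refine Prod.ext ?_ ?_ <;> simp only [Phips] <;> norm_num <;> rw [h] <;> ring_nf
  refine ⟨by simp [Cps]; ring, hfix, ?_⟩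
  intro q hq hD
  by_cases hx : q.1 = 0
  · -- q = (0,2), fixed point
    have hy : q.2 = 2 := by
      simp only [Cps, Set.mem_setOf_eq, hx] at hq
      have : (q.2 - 2) ^ 2 = 0 := by nlinarith [hq]
      have := pow_eq_zero_iff (n := 2) (by norm_num) |>.mp this
      linarith
    have hq02 : q = ((0 : ℝ), (2 : ℝ)) := Prod.ext hx hy
    have : ∀ n : ℕ, (Phips ε)^[n] q = ((0 : ℝ), (2 : ℝ)) := by
      intro n; rw [hq02, Function.iterate_fixed hfix]
    simp only [this]
    exact tendsto_const_nhds
  · set u := (q.2 - 2) / q.1 with hu_def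
    have hq' : q = fparam ε u := paramkey ε hε1 q hq hx
    have hiter : ∀ n : ℕ, (Phips ε)^[n] q = fparam ε (u - 2 * ε * n) := by
      intro n
      induction n with
      | zero => simpa using hq'
      | succ n ih =>
        rw [Function.iterate_succ_apply', ih]
        have hd := hD n
        rw [ih] at hd
        rw [stepkey ε _ hε1 hd]
        congr 1
        push_cast
        ring
    -- convergence
    set s : ℕ → ℝ := fun n => (1 + (u - 2 * ε * n)) ^ 2 + 1 - ε ^ 2 with hs_def
    have hspos : ∀ n, 0 < s n := fun n => spos ε _ hε1
    have hsn : Filter.Tendsto s Filter.atTop Filter.atTop := by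
      have hlin : Filter.Tendsto (fun n : ℕ => 2 * |ε| * n - |1 + u|)
          Filter.atTop Filter.atTop := by
        apply Filter.tendsto_atTop_add_const_right
        exact Filter.Tendsto.const_mul_atTop (by positivity)
          tendsto_natCast_atTop_atTop
      have habs : Filter.Tendsto (fun n : ℕ => |1 + (u - 2 * ε * n)|)
          Filter.atTop Filter.atTop := by
        apply Filter.tendsto_atTop_mono _ hlin
        intro n
        have h0 := abs_sub_abs_le_abs_sub (2 * ε * (n:ℝ)) (1 + u)
        have h3 : |(2 * ε * (n:ℝ)) - (1 + u)| = |1 + (u - 2 * ε * n)| := by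
          rw [abs_sub_comm]
          ring_nf
        have h2 : |(2 * ε * (n:ℝ))| = 2 * |ε| * n := by
          rw [abs_mul, abs_mul]
          simp [abs_of_nonneg (by positivity : (0:ℝ) ≤ (n:ℝ))]
        rw [h3, h2] at h0
        linarith
      have hsq : Filter.Tendsto (fun n : ℕ => (1 + (u - 2 * ε * n)) ^ 2)
          Filter.atTop Filter.atTop := by
        have h4 := (Filter.tendsto_pow_atTop (α := ℝ) (n := 2) (by norm_num)).comp habs
        have h5 : ((fun x : ℝ => x ^ 2) ∘ fun n : ℕ => |1 + (u - 2 * ε * n)|)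
            = fun n : ℕ => (1 + (u - 2 * ε * n)) ^ 2 := by
          funext n
          simp [Function.comp, sq_abs]
        rwa [h5] at h4
      have := Filter.tendsto_atTop_add_const_right Filter.atTop (1 - ε ^ 2) hsq
      simpa [hs_def, sub_eq_add_neg, add_assoc] using this
    have hx0 : Filter.Tendsto (fun n => 2 / s n) Filter.atTop (nhds 0) :=
      Filter.Tendsto.div_atTop tendsto_const_nhds hsn
    have hbound : ∀ n, |2 * (u - 2 * ε * n) / s n| ≤ Real.sqrt (2 * (2 / s n)) + 2 / s n := by
      intro n
      have hsne := (hspos n).ne'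
      have hid : (2 / s n + 2 * (u - 2 * ε * n) / s n) ^ 2
          = 2 * (2 / s n) - (1 - ε ^ 2) * (2 / s n) ^ 2 := by
        field_simp [hs_def]
        ring
      have hxpos : 0 < 2 / s n := div_pos two_pos (hspos n)
      have hsq_le : (2 / s n + 2 * (u - 2 * ε * n) / s n) ^ 2 ≤ 2 * (2 / s n) := by
        rw [hid]
        have hε2 : ε ^ 2 ≤ 1 := by nlinarith [sq_abs ε, abs_nonneg ε]
        nlinarith [mul_nonneg (by linarith : (0:ℝ) ≤ 1 - ε ^ 2) (sq_nonneg (2 / s n))]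
      have habs_le : |2 / s n + 2 * (u - 2 * ε * n) / s n| ≤ Real.sqrt (2 * (2 / s n)) := by
        rw [← Real.sqrt_sq_eq_abs]
        exact Real.sqrt_le_sqrt hsq_le
      calc |2 * (u - 2 * ε * n) / s n|
          = |(2 / s n + 2 * (u - 2 * ε * n) / s n) - 2 / s n| := by congr 1; ring
        _ ≤ |2 / s n + 2 * (u - 2 * ε * n) / s n| + |2 / s n| := abs_sub _ _
        _ ≤ Real.sqrt (2 * (2 / s n)) + 2 / s n := by
            rw [abs_of_pos hxpos]; linarith [habs_le]
    have hb0 : Filter.Tendsto (fun n => Real.sqrt (2 * (2 / s n)) + 2 / s n)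
        Filter.atTop (nhds 0) := by
      have h1 : Filter.Tendsto (fun n => (2 : ℝ) * (2 / s n)) Filter.atTop (nhds 0) := by
        simpa using hx0.const_mul 2
      have h2 : Filter.Tendsto (fun n => Real.sqrt (2 * (2 / s n))) Filter.atTop (nhds 0) := by
        have h3 := (Real.continuous_sqrt.tendsto 0).comp h1
        simpa only [Function.comp_def, Real.sqrt_zero] using h3
      simpa using h2.add hx0
    have hy0 : Filter.Tendsto (fun n => 2 * (u - 2 * ε * n) / s n) Filter.atTop (nhds 0) :=
      squeeze_zero_norm hbound hb0
    have hy2 : Filter.Tendsto (fun n => 2 + 2 * (u - 2 * ε * n) / s n)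
        Filter.atTop (nhds 2) := by
      simpa using (tendsto_const_nhds (x := (2:ℝ)) (f := Filter.atTop (α := ℕ))).add hy0
    have hfinal : Filter.Tendsto (fun n : ℕ => fparam ε (u - 2 * ε * n))
        Filter.atTop (nhds ((0 : ℝ), (2 : ℝ))) := by
      simp only [fparam]
      exact hx0.prodMk_nhds hy2
    simpa only [hiter] using hfinal
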